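/- A nonnegative tensor A of order m and dimension n has ρ(A) > 0 if and only if A is nontrivially nonnegative, i.e., there exists a nonempty index subset I ⊆ [n] such that the principal sub-tensor A_I is strictly nonnegative. -/

import Mathlib

open Finset

noncomputable section

/-- `(A x^{m-1})_i` for a tensor of order `m'+1` and dimension `n`. -/
def tApply {n m' : ℕ} (A : Fin n → (Fin m' → Fin n) → ℝ) (x : Fin n → ℝ) (i : Fin n) : ℝ :=
  ∑ idx : Fin m' → Fin n, A i idx * ∏ k, x (idx k)

/-- Complex version of `tApply`. -/
def tApplyC {n m' : ℕ} (A : Fin n → (Fin m' → Fin n) → ℝ) (x : Fin n → ℂ) (i : Fin n) : ℂ :=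
  ∑ idx : Fin m' → Fin n, (A i idx : ℂ) * ∏ k, x (idx k)

/-- `lam` is an eigenvalue of the tensor `A`. -/
def IsEig {n m' : ℕ} (A : Fin n → (Fin m' → Fin n) → ℝ) (lam : ℂ) : Prop :=
  ∃ x : Fin n → ℂ, x ≠ 0 ∧ ∀ i, tApplyC A x i = lam * x i ^ m'

/-- The spectral radius of a tensor. -/
def specRad {n m' : ℕ} (A : Fin n → (Fin m' → Fin n) → ℝ) : ℝ :=
  sSup {r | ∃ lam, IsEig A lam ∧ r = ‖lam‖}

/-- The majorization matrix `M_A` of a tensor `A`. -/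
def major {n m' : ℕ} (A : Fin n → (Fin m' → Fin n) → ℝ) (i j : Fin n) : ℝ :=
  ∑ idx ∈ univ.filter (fun idx : Fin m' → Fin n => ∃ k, idx k = j), A i idx

/-- The majorization matrix of the principal sub-tensor `A_I`. -/
def subMajor {n m' : ℕ} (A : Fin n → (Fin m' → Fin n) → ℝ) (I : Finset (Fin n))
    (i j : Fin n) : ℝ :=
  ∑ idx ∈ univ.filter (fun idx : Fin m' → Fin n => (∃ k, idx k = j) ∧ ∀ k, idx k ∈ I),
    A i idx

/-- Irreducibility of (the principal submatrix on `I` of) a nonnegative matrix. -/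
def MatIrredOn {n : ℕ} (M : Fin n → Fin n → ℝ) (I : Finset (Fin n)) : Prop :=
  ∀ S ⊆ I, S.Nonempty → S ≠ I → ∃ i ∈ S, ∃ j ∈ I \ S, M i j ≠ 0

/-- A tensor is weakly irreducible if its majorization matrix is irreducible. -/
def WeaklyIrred {n m' : ℕ} (A : Fin n → (Fin m' → Fin n) → ℝ) : Prop :=
  MatIrredOn (major A) Finset.univ

/-- Weak irreducibility of the principal sub-tensor `A_I`. -/
def WeaklyIrredOn {n m' : ℕ} (A : Fin n → (Fin m' → Fin n) → ℝ) (I : Finset (Fin n)) : Prop :=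
  MatIrredOn (subMajor A I) I

/-- `(A_I e_I^{m-1})_i`, the action of the principal sub-tensor on the all-ones vector. -/
def subApplyOnes {n m' : ℕ} (A : Fin n → (Fin m' → Fin n) → ℝ) (I : Finset (Fin n))
    (i : Fin n) : ℝ :=
  ∑ idx ∈ univ.filter (fun idx : Fin m' → Fin n => ∀ k, idx k ∈ I), A i idx

/-- The spectral radius of the principal sub-tensor `A_I`. -/
def subSpecRad {n m' : ℕ} (A : Fin n → (Fin m' → Fin n) → ℝ) (I : Finset (Fin n)) : ℝ :=
  sSup {r | ∃ lam : ℂ, ∃ x : Fin n → ℂ, (∃ i ∈ I, x i ≠ 0) ∧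
    (∀ i ∈ I, (∑ idx ∈ univ.filter (fun idx : Fin m' → Fin n => ∀ k, idx k ∈ I),
      (A i idx : ℂ) * ∏ k, x (idx k)) = lam * x i ^ m') ∧ r = ‖lam‖}


-- Auxiliary lemmas
lemma tApply_nonneg {n m' : ℕ} (A : Fin n → (Fin m' → Fin n) → ℝ)
    (hA : ∀ i idx, 0 ≤ A i idx) {x : Fin n → ℝ} (hx : ∀ i, 0 ≤ x i) (i : Fin n) :
    0 ≤ tApply A x i :=
  Finset.sum_nonneg fun idx _ => mul_nonneg (hA i idx) (Finset.prod_nonneg fun k _ => hx _)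

lemma continuous_tApply {n m' : ℕ} (A : Fin n → (Fin m' → Fin n) → ℝ) (i : Fin n) :
    Continuous fun x : Fin n → ℝ => tApply A x i := by
  unfold tApply
  exact continuous_finset_sum _ fun idx _ =>
    continuous_const.mul (continuous_finset_prod _ fun k _ => continuous_apply (idx k))

lemma prod_le_pow_max {n m' : ℕ} {x : Fin n → ℝ} (hx : ∀ i, 0 ≤ x i) {i : Fin n}
    (hi : ∀ j, x j ≤ x i) (idx : Fin m' → Fin n) :
    ∏ k, x (idx k) ≤ x i ^ m' := by
  calc ∏ k, x (idx k) ≤ ∏ _k : Fin m', x i :=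
        Finset.prod_le_prod (fun k _ => hx _) (fun k _ => hi _)
    _ = x i ^ m' := by rw [Finset.prod_const, Finset.card_univ, Fintype.card_fin]

lemma lam_le_total {n m' : ℕ} (B : Fin n → (Fin m' → Fin n) → ℝ)
    (hB : ∀ i idx, 0 ≤ B i idx) {x : Fin n → ℝ} (hx : ∀ i, 0 ≤ x i)
    (hxs : ∑ i, x i = 1) {lam : ℝ}
    (h : ∀ i, lam * x i ^ m' ≤ tApply B x i) :
    lam ≤ ∑ i, ∑ idx, B i idx := by
  have hne : (univ : Finset (Fin n)).Nonempty := by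
    by_contra hc
    rw [Finset.not_nonempty_iff_eq_empty] at hc
    rw [hc, Finset.sum_empty] at hxs; norm_num at hxs
  obtain ⟨i, _, hi⟩ := Finset.exists_max_image univ x hne
  have hi' : ∀ j, x j ≤ x i := fun j => hi j (mem_univ j)
  have hxi : 0 < x i := by
    rcases lt_or_ge 0 (x i) with h' | h'
    · exact h'
    · exfalso
      have : ∀ j, x j = 0 := fun j => le_antisymm ((hi' j).trans h') (hx j)
      rw [Finset.sum_congr rfl fun j _ => this j, Finset.sum_const, smul_zero] at hxs
      norm_num at hxs
  have h1 : tApply B x i ≤ (∑ idx, B i idx) * x i ^ m' := by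
    rw [Finset.sum_mul]
    exact Finset.sum_le_sum fun idx _ =>
      mul_le_mul_of_nonneg_left (prod_le_pow_max hx hi' idx) (hB i idx)
  have h2 : lam ≤ ∑ idx, B i idx :=
    le_of_mul_le_mul_right (by calc lam * x i ^ m' ≤ tApply B x i := h i
      _ ≤ (∑ idx, B i idx) * x i ^ m' := h1) (pow_pos hxi m')
  exact h2.trans (Finset.single_le_sum
    (fun j _ => Finset.sum_nonneg fun idx _ => hB j idx) (mem_univ i))


lemma posEig {n m' : ℕ} (hm : 1 ≤ m') (B : Fin n → (Fin m' → Fin n) → ℝ)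
    (hB : ∀ i idx, 0 < B i idx) {x0 : Fin n → ℝ} (hx0 : ∀ i, 0 ≤ x0 i)
    (hx0s : ∑ i, x0 i = 1) {μ : ℝ} (hμ : 0 ≤ μ)
    (hc : ∀ i, μ * x0 i ^ m' ≤ tApply B x0 i) :
    ∃ (lam : ℝ) (x : Fin n → ℝ), μ ≤ lam ∧ (∀ i, 0 ≤ x i) ∧ (∑ i, x i = 1) ∧
      ∀ i, tApply B x i = lam * x i ^ m' := by
  have hm0 : m' ≠ 0 := by omega
  set C : Set ((Fin n → ℝ) × ℝ) := {p | (∀ i, 0 ≤ p.1 i) ∧ (∑ i, p.1 i = 1) ∧ μ ≤ p.2 ∧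
      ∀ i, p.2 * p.1 i ^ m' ≤ tApply B p.1 i} with hC
  have hCne : C.Nonempty := ⟨(x0, μ), hx0, hx0s, le_refl μ, hc⟩
  have hclosed : IsClosed C := by
    have : C = (⋂ i, {p : (Fin n → ℝ) × ℝ | 0 ≤ p.1 i}) ∩
        ({p : (Fin n → ℝ) × ℝ | ∑ i, p.1 i = 1} ∩ ({p : (Fin n → ℝ) × ℝ | μ ≤ p.2} ∩
          ⋂ i, {p : (Fin n → ℝ) × ℝ | p.2 * p.1 i ^ m' ≤ tApply B p.1 i})) := by
      ext p; simp [hC, Set.mem_iInter]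
    rw [this]
    refine (isClosed_iInter fun i => isClosed_le continuous_const
        ((continuous_apply i).comp continuous_fst)).inter
      ((isClosed_eq (continuous_finset_sum _ fun i _ =>
          (continuous_apply i).comp continuous_fst) continuous_const).inter
        ((isClosed_le continuous_const continuous_snd).inter
          (isClosed_iInter fun i => isClosed_le
            (continuous_snd.mul (((continuous_apply i).comp continuous_fst).pow m'))
            ((continuous_tApply B i).comp continuous_fst))))
  have hsub : C ⊆ (Set.Icc (0 : Fin n → ℝ) 1) ×ˢ (Set.Icc μ (∑ i, ∑ idx, B i idx)) := by
    rintro ⟨x, lam⟩ ⟨hx, hxs, hμl, hcon⟩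
    refine ⟨⟨fun i => hx i, fun i => ?_⟩, hμl,
      lam_le_total B (fun i idx => (hB i idx).le) hx hxs hcon⟩
    calc x i ≤ ∑ j, x j := Finset.single_le_sum (fun j _ => hx j) (mem_univ i)
      _ = 1 := hxs
  have hCcomp : IsCompact C :=
    (isCompact_Icc.prod isCompact_Icc).of_isClosed_subset hclosed hsub
  obtain ⟨⟨x, lam⟩, hpC, hmax⟩ := hCcomp.exists_isMaxOn hCne continuous_snd.continuousOn
  obtain ⟨hpx, hpxs, hpμ, hpcon⟩ := hpC
  refine ⟨lam, x, hpμ, hpx, hpxs, ?_⟩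
  by_contra hne'
  push_neg at hne'
  obtain ⟨j, hj⟩ := hne'
  have hjlt : lam * x j ^ m' < tApply B x j := (hpcon j).lt_of_ne (Ne.symm hj)
  -- positivity of the image
  have hxt : ∃ t, 0 < x t := by
    by_contra h'
    push_neg at h'
    have : ∑ i, x i ≤ 0 := Finset.sum_nonpos fun i _ => h' i
    rw [hpxs] at this; norm_num at this
  obtain ⟨t, ht⟩ := hxt
  have htpos : ∀ i, 0 < tApply B x i := by
    intro i
    have h2 := Finset.single_le_sum (s := univ)
      (f := fun idx : Fin m' → Fin n => B i idx * ∏ k, x (idx k))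
      (fun idx _ => mul_nonneg (hB i idx).le (Finset.prod_nonneg fun k _ => hpx _))
      (mem_univ (fun _ => t))
    have h1 : (0:ℝ) < B i (fun _ => t) * ∏ k : Fin m', x ((fun _ => t) k) := by
      have heq : ∏ k : Fin m', x ((fun _ => t) k) = x t ^ m' := by
        rw [Finset.prod_const, Finset.card_univ, Fintype.card_fin]
      rw [heq]; exact mul_pos (hB i _) (pow_pos ht m')
    exact lt_of_lt_of_le h1 h2
  set y : Fin n → ℝ := fun i => (tApply B x i) ^ ((m' : ℝ)⁻¹) with hy_def
  have hy : ∀ i, 0 < y i := fun i => Real.rpow_pos_of_pos (htpos i) _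
  have hym : ∀ i, y i ^ m' = tApply B x i := fun i =>
    Real.rpow_inv_natCast_pow (htpos i).le hm0
  have hlam0 : 0 ≤ lam := le_trans hμ hpμ
  set c : ℝ := lam ^ ((m' : ℝ)⁻¹) with hc_def
  have hc0 : 0 ≤ c := Real.rpow_nonneg hlam0 _
  have hcm : c ^ m' = lam := Real.rpow_inv_natCast_pow hlam0 hm0
  have hyx : ∀ s, c * x s ≤ y s := by
    intro s
    apply le_of_pow_le_pow_left₀ hm0 (hy s).le
    rw [mul_pow, hcm, hym]
    exact hpcon s
  have key : ∀ idx : Fin m' → Fin n, lam * ∏ k, x (idx k) ≤ ∏ k, y (idx k) := by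
    intro idx
    calc lam * ∏ k, x (idx k) = ∏ k, (c * x (idx k)) := by
          rw [Finset.prod_mul_distrib, Finset.prod_const, Finset.card_univ,
            Fintype.card_fin, hcm]
      _ ≤ ∏ k, y (idx k) := Finset.prod_le_prod
          (fun k _ => mul_nonneg hc0 (hpx _)) (fun k _ => hyx _)
  have hg : 0 < tApply B x j - lam * x j ^ m' := sub_pos.2 hjlt
  have himp : ∀ i, lam * y i ^ m' + B i (fun _ => j) * (tApply B x j - lam * x j ^ m')
      ≤ tApply B y i := by
    intro i
    have h3 : ∑ idx : Fin m' → Fin n,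
        B i idx * ((∏ k, y (idx k)) - lam * ∏ k, x (idx k))
        = tApply B y i - lam * tApply B x i := by
      unfold tApply
      rw [Finset.mul_sum, ← Finset.sum_sub_distrib]
      exact Finset.sum_congr rfl fun idx _ => by ring
    have h2 : B i (fun _ => j) * ((∏ _k : Fin m', y j) - lam * ∏ _k : Fin m', x j)
        ≤ ∑ idx : Fin m' → Fin n, B i idx * ((∏ k, y (idx k)) - lam * ∏ k, x (idx k)) :=
      Finset.single_le_sum (fun idx _ =>
        mul_nonneg (hB i idx).le (sub_nonneg.2 (key idx))) (mem_univ (fun _ => j))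
    rw [h3] at h2
    have hprodc : ∀ z : Fin n → ℝ, (∏ _k : Fin m', z j) = z j ^ m' := fun z => by
      rw [Finset.prod_const, Finset.card_univ, Fintype.card_fin]
    rw [hprodc y, hprodc x, hym j] at h2
    have := hym i
    nlinarith [h2, hym i]
  -- uniform improvement
  have hnE : (univ : Finset (Fin n)).Nonempty := ⟨t, mem_univ t⟩
  obtain ⟨i₁, _, hi₁⟩ := Finset.exists_min_image univ
    (fun i => B i (fun _ => j) * (tApply B x j - lam * x j ^ m') / y i ^ m') hnE
  set ε : ℝ := B i₁ (fun _ => j) * (tApply B x j - lam * x j ^ m') / y i₁ ^ m' with hε_def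
  have hε : 0 < ε := div_pos (mul_pos (hB i₁ _) hg) (pow_pos (hy i₁) m')
  have hcon' : ∀ i, (lam + ε) * y i ^ m' ≤ tApply B y i := by
    intro i
    have h4 : ε ≤ B i (fun _ => j) * (tApply B x j - lam * x j ^ m') / y i ^ m' :=
      hi₁ i (mem_univ i)
    have h5 : ε * y i ^ m' ≤ B i (fun _ => j) * (tApply B x j - lam * x j ^ m') := by
      rw [← le_div_iff₀ (pow_pos (hy i) m')]; exact h4
    nlinarith [himp i, h5]
  set s : ℝ := ∑ i, y i with hs_def
  have hs : 0 < s := Finset.sum_pos (fun i _ => hy i) hnE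
  set z : Fin n → ℝ := fun i => y i / s with hz_def
  have hzT : ∀ i, tApply B z i = tApply B y i / s ^ m' := by
    intro i
    unfold tApply
    rw [Finset.sum_div]
    refine Finset.sum_congr rfl fun idx _ => ?_
    rw [mul_div_assoc]
    congr 1
    rw [Finset.prod_div_distrib, Finset.prod_const, Finset.card_univ, Fintype.card_fin]
  have hmem : (z, lam + ε) ∈ C := by
    refine ⟨fun i => div_nonneg (hy i).le hs.le, ?_, hpμ.trans (le_add_of_nonneg_right hε.le), ?_⟩
    · rw [← Finset.sum_div, ← hs_def, div_self hs.ne']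
    · intro i
      rw [hzT i]
      have : z i ^ m' = y i ^ m' / s ^ m' := by rw [hz_def]; exact div_pow _ _ _
      rw [this, ← mul_div_assoc]
      gcongr
      exact hcon' i
  have h7 : lam + ε ≤ lam := hmax hmem
  linarith


lemma bddAbove_eigSet {n m' : ℕ} (A : Fin n → (Fin m' → Fin n) → ℝ)
    (hA : ∀ i idx, 0 ≤ A i idx) :
    BddAbove {r | ∃ lam, IsEig A lam ∧ r = ‖lam‖} := by
  refine ⟨∑ i, ∑ idx, A i idx, ?_⟩
  rintro r ⟨lam, ⟨x, hx0, hxe⟩, rfl⟩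
  have hex : ∃ t, x t ≠ 0 := by
    by_contra h'
    push_neg at h'
    exact hx0 (funext h')
  obtain ⟨t, ht⟩ := hex
  have hne : (univ : Finset (Fin n)).Nonempty := ⟨t, mem_univ t⟩
  obtain ⟨i, _, hi⟩ := Finset.exists_max_image univ (fun i => ‖x i‖) hne
  have hxi : 0 < ‖x i‖ :=
    lt_of_lt_of_le (norm_pos_iff.2 ht) (hi t (mem_univ t))
  have h1 : ‖lam‖ * ‖x i‖ ^ m'
      ≤ (∑ idx, A i idx) * ‖x i‖ ^ m' := by
    calc ‖lam‖ * ‖x i‖ ^ m' = ‖tApplyC A x i‖ := by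
          rw [hxe i, norm_mul, norm_pow]
      _ ≤ ∑ idx : Fin m' → Fin n, ‖(A i idx : ℂ) * ∏ k, x (idx k)‖ :=
          norm_sum_le _ _
      _ ≤ ∑ idx : Fin m' → Fin n, A i idx * ‖x i‖ ^ m' := by
          refine Finset.sum_le_sum fun idx _ => ?_
          rw [norm_mul, Complex.norm_real, Real.norm_of_nonneg (hA i idx), norm_prod]
          refine mul_le_mul_of_nonneg_left ?_ (hA i idx)
          calc ∏ k, ‖x (idx k)‖ ≤ ∏ _k : Fin m', ‖x i‖ :=
                Finset.prod_le_prod (fun k _ => norm_nonneg _)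
                  (fun k _ => hi _ (mem_univ _))
            _ = ‖x i‖ ^ m' := by
                rw [Finset.prod_const, Finset.card_univ, Fintype.card_fin]
      _ = (∑ idx, A i idx) * ‖x i‖ ^ m' := (Finset.sum_mul _ _ _).symm
  have h2 : ‖lam‖ ≤ ∑ idx, A i idx :=
    le_of_mul_le_mul_right h1 (pow_pos hxi m')
  exact h2.trans (Finset.single_le_sum
    (fun j _ => Finset.sum_nonneg fun idx _ => hA j idx) (mem_univ i))


lemma forward_dir {n m' : ℕ} (hm : 1 ≤ m') (hn : 1 ≤ n)
    (A : Fin n → (Fin m' → Fin n) → ℝ)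
    (hA : ∀ i idx, 0 ≤ A i idx) (h : 0 < specRad A) :
    ∃ I : Finset (Fin n), I.Nonempty ∧ ∀ i ∈ I, 0 < subApplyOnes A I i := by
  have hSne : {r | ∃ lam, IsEig A lam ∧ r = ‖lam‖}.Nonempty := by
    by_contra h'
    rw [Set.not_nonempty_iff_eq_empty] at h'
    rw [specRad, h', Real.sSup_empty] at h
    exact lt_irrefl 0 h
  obtain ⟨r, ⟨lam, ⟨x, hx0, hxe⟩, rfl⟩, hr⟩ := exists_lt_of_lt_csSup hSne h
  have hlam : lam ≠ 0 := by
    intro h'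
    rw [h'] at hr
    simp at hr
  have hex : ∃ t, x t ≠ 0 := by
    by_contra h'
    push_neg at h'
    exact hx0 (funext h')
  obtain ⟨t, ht⟩ := hex
  refine ⟨univ.filter (fun i => x i ≠ 0), ⟨t, mem_filter.2 ⟨mem_univ t, ht⟩⟩, ?_⟩
  intro i hiI
  set I := univ.filter (fun i => x i ≠ 0) with hI
  have hxi : x i ≠ 0 := (mem_filter.1 hiI).2
  rcases lt_or_ge 0 (subApplyOnes A I i) with h' | h'
  · exact h'
  exfalso
  have hzero : ∀ idx ∈ univ.filter (fun idx : Fin m' → Fin n => ∀ k, idx k ∈ I),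
      A i idx = 0 := by
    have h0 : subApplyOnes A I i = 0 :=
      le_antisymm h' (Finset.sum_nonneg fun idx _ => hA i idx)
    rw [subApplyOnes] at h0
    exact (Finset.sum_eq_zero_iff_of_nonneg fun idx _ => hA i idx).1 h0
  have hT : tApplyC A x i = 0 := by
    rw [tApplyC]
    refine Finset.sum_eq_zero fun idx _ => ?_
    by_cases hidx : ∀ k, idx k ∈ I
    · rw [hzero idx (mem_filter.2 ⟨mem_univ idx, hidx⟩)]
      simp
    · push_neg at hidx
      obtain ⟨k, hk⟩ := hidx
      have : x (idx k) = 0 := by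
        by_contra h''
        exact hk (mem_filter.2 ⟨mem_univ _, h''⟩)
      rw [Finset.prod_eq_zero (mem_univ k) this, mul_zero]
  rw [hxe i] at hT
  exact (mul_ne_zero hlam (pow_ne_zero m' hxi)) hT

lemma backward_dir {n m' : ℕ} (hm : 1 ≤ m') (hn : 1 ≤ n)
    (A : Fin n → (Fin m' → Fin n) → ℝ)
    (hA : ∀ i idx, 0 ≤ A i idx)
    (I : Finset (Fin n)) (hIne : I.Nonempty) (hIpos : ∀ i ∈ I, 0 < subApplyOnes A I i) :
    0 < specRad A := by
  have hm0 : m' ≠ 0 := by omega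
  obtain ⟨i₀, hi₀I, hmin⟩ := Finset.exists_min_image I (subApplyOnes A I) hIne
  set μ : ℝ := subApplyOnes A I i₀ with hμdef
  have hμ : 0 < μ := hIpos i₀ hi₀I
  set c : ℝ := (I.card : ℝ) with hcdef
  have hc : 0 < c := by
    rw [hcdef]
    exact_mod_cast Finset.card_pos.2 hIne
  set x0 : Fin n → ℝ := fun i => if i ∈ I then c⁻¹ else 0 with hx0def
  have hx0 : ∀ i, 0 ≤ x0 i := by
    intro i; rw [hx0def]; dsimp only; split
    · positivity
    · exact le_refl 0
  have hx0s : ∑ i, x0 i = 1 := by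
    rw [hx0def]
    rw [Finset.sum_ite_mem, Finset.univ_inter, Finset.sum_const, nsmul_eq_mul]
    exact mul_inv_cancel₀ hc.ne'
  -- certificate for A
  have hcA : ∀ i, μ * x0 i ^ m' ≤ tApply A x0 i := by
    intro i
    by_cases hiI : i ∈ I
    · have hfil : ∀ idx ∈ univ.filter (fun idx : Fin m' → Fin n => ∀ k, idx k ∈ I),
          A i idx * (c⁻¹) ^ m' = A i idx * ∏ k, x0 (idx k) := by
        intro idx hidx
        have hmem := (mem_filter.1 hidx).2
        congr 1
        rw [eq_comm]
        calc ∏ k, x0 (idx k) = ∏ _k : Fin m', c⁻¹ :=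
              Finset.prod_congr rfl fun k _ => by rw [hx0def]; simp [hmem k]
          _ = (c⁻¹) ^ m' := by rw [Finset.prod_const, Finset.card_univ, Fintype.card_fin]
      have h1 : subApplyOnes A I i * (c⁻¹) ^ m'
          = ∑ idx ∈ univ.filter (fun idx : Fin m' → Fin n => ∀ k, idx k ∈ I),
              A i idx * ∏ k, x0 (idx k) := by
        rw [subApplyOnes, Finset.sum_mul]
        exact Finset.sum_congr rfl hfil
      have h2 : ∑ idx ∈ univ.filter (fun idx : Fin m' → Fin n => ∀ k, idx k ∈ I),
          A i idx * ∏ k, x0 (idx k) ≤ tApply A x0 i := by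
        rw [tApply]
        exact Finset.sum_le_sum_of_subset_of_nonneg (Finset.filter_subset _ _)
          (fun idx _ _ => mul_nonneg (hA i idx) (Finset.prod_nonneg fun k _ => hx0 _))
      have h3 : x0 i = c⁻¹ := by rw [hx0def]; simp [hiI]
      rw [h3]
      calc μ * (c⁻¹) ^ m' ≤ subApplyOnes A I i * (c⁻¹) ^ m' :=
            mul_le_mul_of_nonneg_right (hmin i hiI) (by positivity)
        _ = _ := h1
        _ ≤ tApply A x0 i := h2
    · have h3 : x0 i = 0 := by rw [hx0def]; simp [hiI]
      rw [h3, zero_pow hm0, mul_zero]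
      exact tApply_nonneg A hA hx0 i
  -- perturbed tensors
  set B : ℕ → (Fin n → (Fin m' → Fin n) → ℝ) :=
    fun k i idx => A i idx + 1 / (k + 1 : ℝ) with hBdef
  have hBpos : ∀ k i idx, 0 < B k i idx := by
    intro k i idx
    have : (0:ℝ) < 1 / (k + 1 : ℝ) := by positivity
    exact add_pos_of_nonneg_of_pos (hA i idx) this
  have hAB : ∀ k (x : Fin n → ℝ), (∀ i, 0 ≤ x i) → ∀ i, tApply A x i ≤ tApply (B k) x i := by
    intro k x hx i
    rw [tApply, tApply]
    refine Finset.sum_le_sum fun idx _ => ?_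
    refine mul_le_mul_of_nonneg_right ?_ (Finset.prod_nonneg fun j _ => hx _)
    rw [hBdef]
    simp only
    have : (0:ℝ) ≤ 1 / (k + 1 : ℝ) := by positivity
    linarith
  have H : ∀ k : ℕ, ∃ (lam : ℝ) (x : Fin n → ℝ), μ ≤ lam ∧ (∀ i, 0 ≤ x i) ∧
      (∑ i, x i = 1) ∧ ∀ i, tApply (B k) x i = lam * x i ^ m' :=
    fun k => posEig hm (B k) (hBpos k) hx0 hx0s hμ.le
      (fun i => (hcA i).trans (hAB k x0 hx0 i))
  choose lamf xf hlf hxf hxsf hxef using H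
  set Λ : ℝ := ∑ i, ∑ idx : Fin m' → Fin n, (A i idx + 1) with hΛdef
  have hlam_le : ∀ k, lamf k ≤ Λ := by
    intro k
    have h1 : lamf k ≤ ∑ i, ∑ idx, B k i idx :=
      lam_le_total (B k) (fun i idx => (hBpos k i idx).le) (hxf k) (hxsf k)
        (fun i => (hxef k i).ge)
    refine h1.trans ?_
    rw [hΛdef]
    refine Finset.sum_le_sum fun i _ => Finset.sum_le_sum fun idx _ => ?_
    rw [hBdef]
    simp only
    have h2 : (1:ℝ) / (k + 1 : ℝ) ≤ 1 := by
      rw [div_le_one (by positivity)]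
      norm_num
    linarith
  set K : Set ((Fin n → ℝ) × ℝ) := (Set.Icc (0 : Fin n → ℝ) 1) ×ˢ (Set.Icc μ Λ) with hKdef
  have hu : ∀ k, (xf k, lamf k) ∈ K := by
    intro k
    refine ⟨⟨fun i => hxf k i, fun i => ?_⟩, hlf k, hlam_le k⟩
    calc xf k i ≤ ∑ j, xf k j := Finset.single_le_sum (fun j _ => hxf k j) (mem_univ i)
      _ = 1 := hxsf k
  obtain ⟨⟨xs, ls⟩, hmemK, φ, hφ, hconv⟩ :=
    (isCompact_Icc.prod isCompact_Icc).tendsto_subseq hu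
  have hconvx : Filter.Tendsto (fun k => xf (φ k)) Filter.atTop (nhds xs) :=
    (continuous_fst.tendsto (xs, ls)).comp hconv
  -- sum of limit is 1
  have hsum1 : ∑ i, xs i = 1 := by
    have h1 : Filter.Tendsto (fun k => ∑ i, xf (φ k) i) Filter.atTop (nhds (∑ i, xs i)) :=
      ((continuous_finset_sum univ fun i _ => continuous_apply i).tendsto xs).comp hconvx
    have h2 : (fun k => ∑ i, xf (φ k) i) = fun _ => (1:ℝ) := funext fun k => hxsf (φ k)
    rw [h2] at h1
    exact tendsto_nhds_unique h1 tendsto_const_nhds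
  have hmem1 := hmemK.1
  have hmem2 := hmemK.2
  have hxs0 : ∀ i, 0 ≤ xs i := fun i => hmem1.1 i
  have hls_lb : μ ≤ ls := hmem2.1
  -- eigen equation in the limit
  have heig : ∀ i, tApply A xs i = ls * xs i ^ m' := by
    intro i
    set G : ℝ × ((Fin n → ℝ) × ℝ) → ℝ := fun q =>
      (∑ idx : Fin m' → Fin n, (A i idx + q.1) * ∏ k, q.2.1 (idx k)) - q.2.2 * q.2.1 i ^ m'
      with hGdef
    have hGcont : Continuous G := by
      rw [hGdef]
      refine Continuous.sub ?_ ?_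
      · refine continuous_finset_sum _ fun idx _ => ?_
        exact (continuous_const.add continuous_fst).mul
          (continuous_finset_prod _ fun k _ =>
            (continuous_apply (idx k)).comp (continuous_fst.comp continuous_snd))
      · exact (continuous_snd.comp continuous_snd).mul
          (((continuous_apply i).comp (continuous_fst.comp continuous_snd)).pow m')
    set qf : ℕ → ℝ × ((Fin n → ℝ) × ℝ) :=
      fun k => (1 / (φ k + 1 : ℝ), (xf (φ k), lamf (φ k))) with hqfdef
    have hq : Filter.Tendsto qf Filter.atTop (nhds (0, (xs, ls))) := by
      refine Filter.Tendsto.prodMk_nhds ?_ hconv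
      have h1 : Filter.Tendsto (fun k : ℕ => 1 / (k + 1 : ℝ)) Filter.atTop (nhds 0) :=
        tendsto_one_div_add_atTop_nhds_zero_nat
      exact h1.comp hφ.tendsto_atTop
    have hGk : ∀ k, G (qf k) = 0 := by
      intro k
      have h1 : tApply (B (φ k)) (xf (φ k)) i = lamf (φ k) * xf (φ k) i ^ m' := hxef (φ k) i
      rw [hGdef, hqfdef]
      simp only
      rw [tApply] at h1
      rw [hBdef] at h1
      simp only at h1
      rw [h1]
      ring
    have h1 : Filter.Tendsto (fun k => G (qf k)) Filter.atTop (nhds (G (0, (xs, ls)))) :=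
      (hGcont.tendsto _).comp hq
    have h2 : (fun k => G (qf k)) = fun _ => (0:ℝ) := funext hGk
    rw [h2] at h1
    have h3 : G (0, (xs, ls)) = 0 := tendsto_nhds_unique h1 tendsto_const_nhds
    rw [hGdef] at h3
    simp only at h3
    rw [tApply]
    have h4 : ∑ idx : Fin m' → Fin n, (A i idx + 0) * ∏ k, xs (idx k)
        = ∑ idx : Fin m' → Fin n, A i idx * ∏ k, xs (idx k) := by
      refine Finset.sum_congr rfl fun idx _ => by rw [add_zero]
    rw [h4] at h3
    linarith [h3]
  -- conclude
  have hls : 0 < ls := lt_of_lt_of_le hμ hls_lb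
  have hxsne : ∃ i, xs i ≠ 0 := by
    by_contra h'
    push_neg at h'
    rw [Finset.sum_congr rfl fun i _ => h' i, Finset.sum_const, smul_zero] at hsum1
    norm_num at hsum1
  have hEig : IsEig A (ls : ℂ) := by
    refine ⟨fun i => (xs i : ℂ), ?_, ?_⟩
    · obtain ⟨i, hi⟩ := hxsne
      intro h'
      have := congr_fun h' i
      simp only [Pi.zero_apply, Complex.ofReal_eq_zero] at this
      exact hi this
    · intro i
      have h1 : tApplyC A (fun t => (xs t : ℂ)) i = ((tApply A xs i : ℝ) : ℂ) := by
        rw [tApplyC, tApply]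
        push_cast
        ring
      rw [h1, heig i]
      push_cast
      ring
  have hmemS : ls ∈ {r | ∃ lam, IsEig A lam ∧ r = ‖lam‖} :=
    ⟨(ls : ℂ), hEig, by rw [Complex.norm_real, Real.norm_of_nonneg hls.le]⟩
  calc (0:ℝ) < ls := hls
    _ ≤ specRad A := le_csSup (bddAbove_eigSet A hA) hmemS


/-- positive spectral radius iff nontrivially nonnegative. -/
theorem positive_spectral_radius_iff {n m' : ℕ} (hm : 1 ≤ m') (hn : 1 ≤ n)
    (A : Fin n → (Fin m' → Fin n) → ℝ)
    (hA : ∀ i idx, 0 ≤ A i idx) :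
    0 < specRad A ↔
      ∃ I : Finset (Fin n), I.Nonempty ∧ ∀ i ∈ I, 0 < subApplyOnes A I i := by
  constructor
  · exact forward_dir hm hn A hA
  · rintro ⟨I, hIne, hIpos⟩
    exact backward_dir hm hn A hA I hIne hIpos
end
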